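/- Let T be a symmetric monoidal category and equip the arrow category of T (equivalently, the category of functors from the walking arrow to T) with the pointwise monoidal structure. If an object f : X₁ ⟶ X₂ of this arrow category is dualizable (i.e., admits a dual object), then the morphism f is an isomorphism in T. -/

import Mathlib

open CategoryTheory MonoidalCategory

/-- Let `T` be a symmetric monoidal category and equip the arrow category of
`T` (the category of functors from the walking arrow `Fin 2` to `T`) with the pointwise
monoidal structure.  If an object `F` of this arrow category, corresponding to a morphism
`f : X₁ ⟶ X₂` of `T`, is dualizable, then `f` is an isomorphism in `T`. -/
theorem dualizable_arrow_isIso {T : Type*} [Category T] [MonoidalCategory T]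
    [SymmetricCategory T] (F : Fin 2 ⥤ T) [HasRightDual F] :
    IsIso (F.map (homOfLE (by decide : (0 : Fin 2) ≤ 1))) := by
  set φ : (0 : Fin 2) ⟶ 1 := homOfLE (by decide) with hφ
  set f : F.obj 0 ⟶ F.obj 1 := F.map φ with hf
  set g : (Fᘁ).obj 0 ⟶ (Fᘁ).obj 1 := (Fᘁ).map φ with hg
  obtain ⟨e0, he0⟩ : ∃ e : 𝟙_ T ⟶ F.obj 0 ⊗ (Fᘁ).obj 0, e = (η_ F Fᘁ).app 0 := ⟨_, rfl⟩
  obtain ⟨e1, he1⟩ : ∃ e : 𝟙_ T ⟶ F.obj 1 ⊗ (Fᘁ).obj 1, e = (η_ F Fᘁ).app 1 := ⟨_, rfl⟩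
  obtain ⟨d0, hd0⟩ : ∃ e : (Fᘁ).obj 0 ⊗ F.obj 0 ⟶ 𝟙_ T, e = (ε_ F Fᘁ).app 0 := ⟨_, rfl⟩
  obtain ⟨d1, hd1⟩ : ∃ e : (Fᘁ).obj 1 ⊗ F.obj 1 ⟶ 𝟙_ T, e = (ε_ F Fᘁ).app 1 := ⟨_, rfl⟩
  have hη : e0 ≫ (f ⊗ₘ g) = e1 := by
    subst he0 he1
    have := (η_ F Fᘁ).naturality φ
    have := this.symm
    simp at this
    exact this.trans (Category.id_comp _)
  have hε : (g ⊗ₘ f) ≫ d1 = d0 := by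
    subst hd0 hd1
    have := (ε_ F Fᘁ).naturality φ
    simp at this
    exact this.trans (Category.comp_id _)
  have zig : ∀ c : Fin 2, ((η_ F Fᘁ).app c ▷ F.obj c) ≫ (α_ _ _ _).hom ≫
      (F.obj c ◁ (ε_ F Fᘁ).app c) = (λ_ (F.obj c)).hom ≫ (ρ_ (F.obj c)).inv := fun c =>
    NatTrans.congr_app (ExactPairing.evaluation_coevaluation F Fᘁ) c
  have zig0 : (e0 ▷ F.obj 0) ≫ (α_ _ _ _).hom ≫ (F.obj 0 ◁ d0) =
      (λ_ (F.obj 0)).hom ≫ (ρ_ (F.obj 0)).inv := by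
    subst he0 hd0
    exact zig 0
  have zig1 : (e1 ▷ F.obj 1) ≫ (α_ _ _ _).hom ≫ (F.obj 1 ◁ d1) =
      (λ_ (F.obj 1)).hom ≫ (ρ_ (F.obj 1)).inv := by
    subst he1 hd1
    exact zig 1
  refine ⟨(λ_ _).inv ≫ (e0 ▷ F.obj 1) ≫ ((F.obj 0 ◁ g) ▷ F.obj 1) ≫
      (α_ _ _ _).hom ≫ (F.obj 0 ◁ d1) ≫ (ρ_ _).hom, ?_, ?_⟩
  · slice_lhs 1 2 => rw [leftUnitor_inv_naturality]
    slice_lhs 2 3 => rw [whisker_exchange]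
    slice_lhs 3 4 => rw [whisker_exchange]
    slice_lhs 4 5 => rw [associator_naturality_right]
    slice_lhs 3 4 => rw [associator_naturality_middle]
    slice_lhs 4 6 => rw [← MonoidalCategory.whiskerLeft_comp,
      ← MonoidalCategory.whiskerLeft_comp, ← Category.assoc, ← MonoidalCategory.tensorHom_def, hε]
    slice_lhs 2 4 => rw [zig0]
    simp
  · have hx : F.obj 0 ◁ d1 ≫ f ▷ (𝟙_ T) =
        f ▷ ((Fᘁ).obj 1 ⊗ F.obj 1) ≫ F.obj 1 ◁ d1 :=
      whisker_exchange f d1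
    slice_lhs 6 7 => rw [← rightUnitor_naturality]
    slice_lhs 5 6 => rw [hx]
    slice_lhs 4 5 => rw [← associator_naturality_left]
    slice_lhs 3 4 => rw [← comp_whiskerRight, ← tensorHom_def']
    slice_lhs 2 3 => rw [← comp_whiskerRight, hη]
    slice_lhs 2 4 => rw [zig1]
    simp
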